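/- Let G be a k-critical graph (k ≥ 4), and let A, B be disjoint vertex subsets such that at least one of A, B is independent, every vertex of A has degree k−1 in G, every vertex of B has degree k in G, and A ∪ B is nonempty. Then the bipartite graph G(A,B) consisting of the edges of G joining A to B has a vertex of degree at most 2. -/

import Mathlib

/-- A graph is `k`-critical if its chromatic number is `k` but every proper
subgraph is `(k−1)`-colorable. -/
def IsCritical {V : Type*} (G : SimpleGraph V) (k : ℕ) : Prop :=
  G.chromaticNumber = (k : ℕ∞) ∧
    ∀ H : SimpleGraph V, H ≤ G → H ≠ G → H.chromaticNumber ≤ ((k - 1 : ℕ) : ℕ∞)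


open Finset

/-- Kernel existence for digraphs with symmetric arcs inside `Xs` and no arcs
outside `Xs` (on both ends). Cross arcs arbitrary. -/
lemma kernel_exists {V : Type*} [DecidableEq V] (arc : V → V → Prop) [DecidableRel arc]
    (Xs : Finset V)
    (hirr : ∀ v, ¬ arc v v)
    (hsym : ∀ u v, u ∈ Xs → v ∈ Xs → arc u v → arc v u)
    (hY : ∀ u v, u ∉ Xs → v ∉ Xs → ¬ arc u v)
    (T : Finset V) :
    ∃ K, K ⊆ T ∧ (∀ u ∈ K, ∀ v ∈ K, ¬ arc u v) ∧
      (∀ v ∈ T, v ∉ K → ∃ u ∈ K, arc v u) := by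
  induction T using Finset.strongInduction with
  | _ T ih =>
    by_cases hall : ∀ x ∈ T ∩ Xs, ∃ y ∈ T, y ∉ Xs ∧ arc x y
    · refine ⟨T.filter (fun v => v ∉ Xs), filter_subset _ _, ?_, ?_⟩
      · intro u hu v hv
        simp only [mem_filter] at hu hv
        exact hY u v hu.2 hv.2
      · intro v hv hvK
        have hvXs : v ∈ Xs := by
          by_contra h
          exact hvK (mem_filter.mpr ⟨hv, h⟩)
        obtain ⟨y, hy, hyXs, harc⟩ := hall v (mem_inter.mpr ⟨hv, hvXs⟩)
        exact ⟨y, mem_filter.mpr ⟨hy, hyXs⟩, harc⟩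
    · push_neg at hall
      obtain ⟨x₀, hx₀, hx₀out⟩ := hall
      have hx₀T : x₀ ∈ T := (mem_inter.mp hx₀).1
      have hx₀Xs : x₀ ∈ Xs := (mem_inter.mp hx₀).2
      set T' := (T.erase x₀).filter (fun u => ¬ arc u x₀) with hT'
      have hss : T' ⊂ T := by
        refine Finset.ssubset_iff_of_subset ((filter_subset _ _).trans (erase_subset _ _)) |>.mpr ?_
        exact ⟨x₀, hx₀T, fun h => (mem_erase.mp (mem_filter.mp h).1).1 rfl⟩
      obtain ⟨K', hK'sub, hK'ind, hK'abs⟩ := ih T' hss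
      refine ⟨insert x₀ K', ?_, ?_, ?_⟩
      · intro u hu
        rcases mem_insert.mp hu with rfl | hu
        · exact hx₀T
        · exact ((filter_subset _ _).trans (erase_subset _ _)) (hK'sub hu)
      · have key : ∀ v ∈ K', ¬ arc x₀ v := by
          intro v hv harc
          have hvT : v ∈ T := ((filter_subset _ _).trans (erase_subset _ _)) (hK'sub hv)
          have hvXs : v ∈ Xs := by
            by_contra h
            exact hx₀out v hvT h harc
          have : arc v x₀ := hsym x₀ v hx₀Xs hvXs harc
          exact (mem_filter.mp (hK'sub hv)).2 this
        intro u hu v hv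
        rcases mem_insert.mp hu with hu0 | hu <;> rcases mem_insert.mp hv with hv0 | hv
        · rw [hu0, hv0]; exact hirr x₀
        · rw [hu0]; exact key v hv
        · rw [hv0]; exact (mem_filter.mp (hK'sub hu)).2
        · exact hK'ind u hu v hv
      · intro v hv hvK
        by_cases harc : arc v x₀
        · exact ⟨x₀, mem_insert_self _ _, harc⟩
        · have hvne : v ≠ x₀ := fun h => hvK (h ▸ mem_insert_self _ _)
          have hvT' : v ∈ T' := mem_filter.mpr ⟨mem_erase.mpr ⟨hvne, hv⟩, harc⟩
          have hvK' : v ∉ K' := fun h => hvK (mem_insert_of_mem h)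
          obtain ⟨u, hu, harc'⟩ := hK'abs v hvT' hvK'
          exact ⟨u, mem_insert_of_mem hu, harc'⟩

/-- Kernel-based list coloring. -/
lemma kernel_coloring {V : Type*} [DecidableEq V] (arc : V → V → Prop) [DecidableRel arc]
    (Xs : Finset V)
    (hirr : ∀ v, ¬ arc v v)
    (hsym : ∀ u v, u ∈ Xs → v ∈ Xs → arc u v → arc v u)
    (hY : ∀ u v, u ∉ Xs → v ∉ Xs → ¬ arc u v) :
    ∀ (n : ℕ) (T : Finset V) (L : V → Finset ℕ),
      (∑ v ∈ T, (L v).card) ≤ n →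
      (∀ v ∈ T, (T.filter (fun u => arc v u)).card < (L v).card) →
      ∃ c : V → ℕ, (∀ v ∈ T, c v ∈ L v) ∧
        (∀ u ∈ T, ∀ v ∈ T, arc u v → c u ≠ c v) := by
  intro n
  induction n with
  | zero =>
    intro T L hsum hbud
    rcases T.eq_empty_or_nonempty with rfl | ⟨v₀, hv₀⟩
    · exact ⟨fun _ => 0, by simp, by simp⟩
    · exfalso
      have h1 : 1 ≤ (L v₀).card := Nat.lt_of_le_of_lt (Nat.zero_le _) (hbud v₀ hv₀)
      have h2 : (L v₀).card ≤ ∑ v ∈ T, (L v).card :=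
        Finset.single_le_sum (f := fun v => (L v).card) (fun v _ => Nat.zero_le _) hv₀
      have : 1 ≤ ∑ v ∈ T, (L v).card := le_trans h1 h2
      omega
  | succ n ih =>
    intro T L hsum hbud
    rcases T.eq_empty_or_nonempty with rfl | ⟨v₀, hv₀⟩
    · exact ⟨fun _ => 0, by simp, by simp⟩
    · have hLv₀ : (L v₀).Nonempty := by
        rw [← Finset.card_pos]
        exact Nat.lt_of_le_of_lt (Nat.zero_le _) (hbud v₀ hv₀)
      obtain ⟨c₀, hc₀⟩ := hLv₀
      set U := T.filter (fun v => c₀ ∈ L v) with hU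
      have hv₀U : v₀ ∈ U := mem_filter.mpr ⟨hv₀, hc₀⟩
      obtain ⟨K, hKU, hKind, hKabs⟩ := kernel_exists arc Xs hirr hsym hY U
      have hKT : K ⊆ T := hKU.trans (filter_subset _ _)
      have hKne : K.Nonempty := by
        by_contra h
        rw [Finset.not_nonempty_iff_eq_empty] at h
        obtain ⟨u, hu, -⟩ := hKabs v₀ hv₀U (by simp [h])
        simp [h] at hu
      set T' := T \ K with hT'
      set L' : V → Finset ℕ := fun v => if v ∈ U then (L v).erase c₀ else L v with hL'
      -- sum decreases
      have hsum' : (∑ v ∈ T', (L' v).card) ≤ n := by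
        have h1 : (∑ v ∈ T', (L' v).card) ≤ ∑ v ∈ T', (L v).card := by
          apply Finset.sum_le_sum
          intro v _
          by_cases hvU : v ∈ U <;> simp [hL', hvU, Finset.card_erase_le]
        have h2 : (∑ v ∈ T', (L v).card) + (∑ v ∈ K, (L v).card) = ∑ v ∈ T, (L v).card :=
          Finset.sum_sdiff hKT
        obtain ⟨k₀, hk₀⟩ := hKne
        have hk₀U : k₀ ∈ U := hKU hk₀
        have hk₀L : 1 ≤ (L k₀).card :=
          Finset.card_pos.mpr ⟨c₀, (mem_filter.mp hk₀U).2⟩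
        have h3' : (L k₀).card ≤ ∑ v ∈ K, (L v).card :=
          Finset.single_le_sum (f := fun v => (L v).card) (fun v _ => Nat.zero_le _) hk₀
        have h3 : 1 ≤ ∑ v ∈ K, (L v).card := le_trans hk₀L h3'
        omega
      -- budgets hold
      have hbud' : ∀ v ∈ T', (T'.filter (fun u => arc v u)).card < (L' v).card := by
        intro v hv
        have hvT : v ∈ T := (Finset.mem_sdiff.mp hv).1
        have hvK : v ∉ K := (Finset.mem_sdiff.mp hv).2
        by_cases hvU : v ∈ U
        · obtain ⟨u₀, hu₀K, hu₀arc⟩ := hKabs v hvU hvK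
          have hsub : T'.filter (fun u => arc v u) ⊆ (T.filter (fun u => arc v u)).erase u₀ := by
            intro w hw
            have hw1 := Finset.mem_filter.mp hw
            have hwT' := Finset.mem_sdiff.mp hw1.1
            refine Finset.mem_erase.mpr ⟨?_, Finset.mem_filter.mpr ⟨hwT'.1, hw1.2⟩⟩
            intro h; exact hwT'.2 (h ▸ hu₀K)
          have hmem : u₀ ∈ T.filter (fun u => arc v u) :=
            Finset.mem_filter.mpr ⟨hKT hu₀K, hu₀arc⟩
          have h4 := Finset.card_le_card hsub
          rw [Finset.card_erase_of_mem hmem] at h4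
          have h5 := hbud v hvT
          have h6 : 1 ≤ (T.filter (fun u => arc v u)).card := Finset.card_pos.mpr ⟨u₀, hmem⟩
          have h7 : (L' v).card = (L v).card - 1 := by
            simp [hL', hvU, Finset.card_erase_of_mem (mem_filter.mp hvU).2]
          omega
        · have hsub : T'.filter (fun u => arc v u) ⊆ T.filter (fun u => arc v u) :=
            Finset.filter_subset_filter _ (Finset.sdiff_subset)
          have h4 := Finset.card_le_card hsub
          have h5 := hbud v hvT
          have h7 : (L' v).card = (L v).card := by simp [hL', hvU]
          omega
      obtain ⟨c', hc'mem, hc'prop⟩ := ih T' L' hsum' hbud'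
      refine ⟨fun v => if v ∈ K then c₀ else c' v, ?_, ?_⟩
      · intro v hv
        by_cases hvK : v ∈ K
        · simpa [hvK] using (mem_filter.mp (hKU hvK)).2
        · have hvT' : v ∈ T' := Finset.mem_sdiff.mpr ⟨hv, hvK⟩
          have := hc'mem v hvT'
          by_cases hvU : v ∈ U
          · simp only [hL', hvU, if_true] at this
            simpa [hvK] using Finset.erase_subset _ _ this
          · simpa [hvK, hL', hvU] using this
      · intro u hu v hv harc
        by_cases huK : u ∈ K <;> by_cases hvK : v ∈ K
        · exact absurd harc (hKind u huK v hvK)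
        · -- u ∈ K colored c₀, v not
          have hvT' : v ∈ T' := Finset.mem_sdiff.mpr ⟨hv, hvK⟩
          have hmem := hc'mem v hvT'
          simp only [huK, hvK, if_true, if_false]
          intro h
          by_cases hvU : v ∈ U
          · simp only [hL', hvU, if_true] at hmem
            exact (Finset.ne_of_mem_erase hmem) h.symm
          · have : c₀ ∉ L v := fun hc => hvU (mem_filter.mpr ⟨hv, hc⟩)
            simp only [hL', hvU, if_false] at hmem
            exact this (h ▸ hmem)
        · have huT' : u ∈ T' := Finset.mem_sdiff.mpr ⟨hu, huK⟩
          have hmem := hc'mem u huT'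
          simp only [huK, hvK, if_true, if_false]
          intro h
          by_cases huU : u ∈ U
          · simp only [hL', huU, if_true] at hmem
            exact (Finset.ne_of_mem_erase hmem) h
          · have : c₀ ∉ L u := fun hc => huU (mem_filter.mpr ⟨hu, hc⟩)
            simp only [hL', huU, if_false] at hmem
            exact this (h ▸ hmem)
        · have huT' : u ∈ T' := Finset.mem_sdiff.mpr ⟨hu, huK⟩
          have hvT' : v ∈ T' := Finset.mem_sdiff.mpr ⟨hv, hvK⟩
          simpa [huK, hvK] using hc'prop u huT' v hvT' harc

lemma orientation_exists {V : Type*} [Fintype V] [DecidableEq V] (A B : Finset V)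
    (hdisj : Disjoint A B) (E : Finset (V × V))
    (hE : ∀ e ∈ E, e.1 ∈ A ∧ e.2 ∈ B)
    (hdA : ∀ a ∈ A, 3 ≤ (E.filter (fun e => e.1 = a)).card)
    (hdB : ∀ b ∈ B, 3 ≤ (E.filter (fun e => e.2 = b)).card) :
    ∃ dir : V × V → Bool,
      (∀ a ∈ A, ∃ e ∈ E, e.1 = a ∧ dir e = false) ∧
      (∀ b ∈ B, 2 ≤ (E.filter (fun e => e.2 = b ∧ dir e = true)).card) := by
  classical
  have hAB : ∀ v, v ∈ A → v ∈ B → False := fun v hva hvb =>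
    (Finset.disjoint_left.mp hdisj) hva hvb
  set r : (V ⊕ V) → Finset ((V × V) ⊕ (V ⊕ V)) := fun i =>
    match i with
    | .inl v =>
      if v ∈ A then (E.filter (fun e => e.1 = v)).image .inl
      else if v ∈ B then (E.filter (fun e => e.2 = v)).image .inl
      else {.inr (.inl v)}
    | .inr v =>
      if v ∈ B then (E.filter (fun e => e.2 = v)).image .inl
      else {.inr (.inr v)} with hr
  have hall : ∀ s : Finset (V ⊕ V), s.card ≤ (s.biUnion r).card := by
    intro s
    set sA : Finset V := A.filter (fun a => .inl a ∈ s) with hsA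
    set sB : Finset V := B.filter (fun b => .inl b ∈ s ∨ .inr b ∈ s) with hsB
    set sD : Finset (V ⊕ V) := s.filter (fun i =>
      match i with
      | .inl v => v ∉ A ∧ v ∉ B
      | .inr v => v ∉ B) with hsD
    -- upper bound on s.card
    have hup : s.card ≤ sA.card + sB.card + sB.card + sD.card := by
      have hsub : s ⊆ (sA.image .inl) ∪ ((sB.image .inl) ∪ ((sB.image .inr) ∪ sD)) := by
        intro i hi
        match i with
        | .inl v =>
          by_cases hva : v ∈ A
          · exact mem_union_left _ (mem_image_of_mem _ (mem_filter.mpr ⟨hva, hi⟩))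
          · by_cases hvb : v ∈ B
            · exact mem_union_right _ (mem_union_left _
                (mem_image_of_mem _ (mem_filter.mpr ⟨hvb, Or.inl hi⟩)))
            · refine mem_union_right _ (mem_union_right _ (mem_union_right _ ?_))
              refine mem_filter.mpr ⟨hi, ?_⟩
              exact ⟨hva, hvb⟩
        | .inr v =>
          by_cases hvb : v ∈ B
          · exact mem_union_right _ (mem_union_right _ (mem_union_left _
              (mem_image_of_mem _ (mem_filter.mpr ⟨hvb, Or.inr hi⟩))))
          · refine mem_union_right _ (mem_union_right _ (mem_union_right _ ?_))
            refine mem_filter.mpr ⟨hi, ?_⟩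
            exact hvb
      have h1 := Finset.card_le_card hsub
      have h2 := Finset.card_union_le (sA.image (Sum.inl : V → V ⊕ V))
        ((sB.image .inl) ∪ ((sB.image .inr) ∪ sD))
      have h3 := Finset.card_union_le (sB.image (Sum.inl : V → V ⊕ V)) ((sB.image .inr) ∪ sD)
      have h4 := Finset.card_union_le (sB.image (Sum.inr : V → V ⊕ V)) sD
      have h5 : (sA.image (Sum.inl : V → V ⊕ V)).card ≤ sA.card := Finset.card_image_le
      have h6 : (sB.image (Sum.inl : V → V ⊕ V)).card ≤ sB.card := Finset.card_image_le
      have h7 : (sB.image (Sum.inr : V → V ⊕ V)).card ≤ sB.card := Finset.card_image_le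
      omega
    -- lower bounds on biUnion
    set EA : Finset (V × V) := E.filter (fun e => e.1 ∈ sA) with hEA
    set EB : Finset (V × V) := E.filter (fun e => e.2 ∈ sB) with hEB
    have hsAA : sA ⊆ A := filter_subset _ _
    have hsBB : sB ⊆ B := filter_subset _ _
    have hEAcard : 3 * sA.card ≤ EA.card := by
      have heq : EA = sA.biUnion (fun a => E.filter (fun e => e.1 = a)) := by
        ext e
        simp only [hEA, mem_filter, mem_biUnion]
        constructor
        · rintro ⟨he, ha⟩; exact ⟨e.1, ha, he, rfl⟩
        · rintro ⟨a, ha, he, rfl⟩; exact ⟨he, ha⟩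
      rw [heq, Finset.card_biUnion]
      · have hb : ∀ a ∈ sA, 3 ≤ (E.filter (fun e => e.1 = a)).card :=
          fun a ha => hdA a (hsAA ha)
        calc 3 * sA.card = ∑ _a ∈ sA, 3 := by rw [Finset.sum_const, smul_eq_mul, mul_comm]
          _ ≤ _ := Finset.sum_le_sum hb
      · intro x hx y hy hxy
        simp only [Function.onFun]
        rw [Finset.disjoint_left]
        intro e he1 he2
        exact hxy (((mem_filter.mp he1).2).symm.trans (mem_filter.mp he2).2)
    have hEBcard : 3 * sB.card ≤ EB.card := by
      have heq : EB = sB.biUnion (fun b => E.filter (fun e => e.2 = b)) := by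
        ext e
        simp only [hEB, mem_filter, mem_biUnion]
        constructor
        · rintro ⟨he, hb⟩; exact ⟨e.2, hb, he, rfl⟩
        · rintro ⟨b, hb, he, rfl⟩; exact ⟨he, hb⟩
      rw [heq, Finset.card_biUnion]
      · have hbb : ∀ b ∈ sB, 3 ≤ (E.filter (fun e => e.2 = b)).card :=
          fun b hb => hdB b (hsBB hb)
        calc 3 * sB.card = ∑ _b ∈ sB, 3 := by rw [Finset.sum_const, smul_eq_mul, mul_comm]
          _ ≤ _ := Finset.sum_le_sum hbb
      · intro x hx y hy hxy
        simp only [Function.onFun]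
        rw [Finset.disjoint_left]
        intro e he1 he2
        exact hxy (((mem_filter.mp he1).2).symm.trans (mem_filter.mp he2).2)
    -- pieces are inside the biUnion
    have hmemEA : (EA.image (Sum.inl : V × V → (V × V) ⊕ (V ⊕ V))) ⊆ s.biUnion r := by
      intro x hx
      obtain ⟨e, he, rfl⟩ := Finset.mem_image.mp hx
      obtain ⟨heE, ha⟩ := mem_filter.mp he
      have haA : e.1 ∈ A := hsAA ha
      have hsl : (Sum.inl e.1 : V ⊕ V) ∈ s := (mem_filter.mp ha).2
      refine Finset.mem_biUnion.mpr ⟨.inl e.1, hsl, ?_⟩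
      simp only [hr, haA, if_true]
      exact mem_image_of_mem _ (mem_filter.mpr ⟨heE, rfl⟩)
    have hmemEB : (EB.image (Sum.inl : V × V → (V × V) ⊕ (V ⊕ V))) ⊆ s.biUnion r := by
      intro x hx
      obtain ⟨e, he, rfl⟩ := Finset.mem_image.mp hx
      obtain ⟨heE, hb⟩ := mem_filter.mp he
      have hbB : e.2 ∈ B := hsBB hb
      have hbA : e.2 ∉ A := fun h => hAB e.2 h hbB
      rcases (mem_filter.mp hb).2 with hsl | hsl
      · refine Finset.mem_biUnion.mpr ⟨.inl e.2, hsl, ?_⟩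
        simp only [hr, hbA, if_false, hbB, if_true]
        exact mem_image_of_mem _ (mem_filter.mpr ⟨heE, rfl⟩)
      · refine Finset.mem_biUnion.mpr ⟨.inr e.2, hsl, ?_⟩
        simp only [hr, hbB, if_true]
        exact mem_image_of_mem _ (mem_filter.mpr ⟨heE, rfl⟩)
    have hmemD : (sD.image (Sum.inr : (V ⊕ V) → (V × V) ⊕ (V ⊕ V))) ⊆ s.biUnion r := by
      intro x hx
      obtain ⟨i, hi, rfl⟩ := Finset.mem_image.mp hx
      obtain ⟨his, hcond⟩ := mem_filter.mp hi
      refine Finset.mem_biUnion.mpr ⟨i, his, ?_⟩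
      match i with
      | .inl v =>
        simp only [hr, hcond.1, hcond.2, if_false]
        exact mem_singleton_self _
      | .inr v =>
        simp only [hr, hcond, if_false]
        exact mem_singleton_self _
    have hdisj1 : ∀ (X : Finset (V × V)),
        Disjoint (X.image (Sum.inl : V × V → (V × V) ⊕ (V ⊕ V))) (sD.image Sum.inr) := by
      intro X
      rw [Finset.disjoint_left]
      rintro x hx1 hx2
      obtain ⟨e, -, rfl⟩ := Finset.mem_image.mp hx1
      obtain ⟨i, -, h⟩ := Finset.mem_image.mp hx2
      exact Sum.inr_ne_inl h
    have hcardA : EA.card + sD.card ≤ (s.biUnion r).card := by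
      have hu := Finset.card_union_of_disjoint (hdisj1 EA)
      have h1 := Finset.card_le_card (Finset.union_subset hmemEA hmemD)
      rw [hu, Finset.card_image_of_injective _ Sum.inl_injective,
        Finset.card_image_of_injective _ Sum.inr_injective] at h1
      exact h1
    have hcardB : EB.card + sD.card ≤ (s.biUnion r).card := by
      have hu := Finset.card_union_of_disjoint (hdisj1 EB)
      have h1 := Finset.card_le_card (Finset.union_subset hmemEB hmemD)
      rw [hu, Finset.card_image_of_injective _ Sum.inl_injective,
        Finset.card_image_of_injective _ Sum.inr_injective] at h1
      exact h1
    omega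
  obtain ⟨f, hfinj, hfmem⟩ :=
    (Finset.all_card_le_biUnion_card_iff_exists_injective r).mp hall
  refine ⟨fun e => decide (f (.inl e.2) = .inl e ∨ f (.inr e.2) = .inl e), ?_, ?_⟩
  · intro a ha
    have hm := hfmem (.inl a)
    simp only [hr, ha, if_true] at hm
    obtain ⟨e, he, hfe⟩ := Finset.mem_image.mp hm
    obtain ⟨heE, he1⟩ := mem_filter.mp he
    refine ⟨e, heE, he1, ?_⟩
    rw [decide_eq_false_iff_not]
    rintro (h | h)
    · have h2 : f (.inl e.2) = f (.inl a) := by rw [h, hfe]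
      have h3 := hfinj h2
      have h4 : e.2 = a := Sum.inl.inj h3
      exact hAB a ha (h4 ▸ (hE e heE).2)
    · have h2 : f (.inr e.2) = f (.inl a) := by rw [h, hfe]
      exact Sum.inr_ne_inl (hfinj h2)
  · intro b hb
    have hbA : b ∉ A := fun h => hAB b h hb
    have hm1 := hfmem (.inl b)
    simp only [hr, hbA, if_false, hb, if_true] at hm1
    obtain ⟨e₁, he₁, hf1⟩ := Finset.mem_image.mp hm1
    obtain ⟨he₁E, he₁2⟩ := mem_filter.mp he₁
    have hm2 := hfmem (.inr b)
    simp only [hr, hb, if_true] at hm2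
    obtain ⟨e₂, he₂, hf2⟩ := Finset.mem_image.mp hm2
    obtain ⟨he₂E, he₂2⟩ := mem_filter.mp he₂
    have hne : e₁ ≠ e₂ := by
      rintro rfl
      have : f (.inl b) = f (.inr b) := by rw [← hf1, ← hf2]
      exact Sum.inl_ne_inr (hfinj this)
    have hd1 : decide (f (.inl e₁.2) = .inl e₁ ∨ f (.inr e₁.2) = .inl e₁) = true := by
      rw [decide_eq_true_iff]
      exact Or.inl (by rw [he₁2]; exact hf1.symm)
    have hd2 : decide (f (.inl e₂.2) = .inl e₂ ∨ f (.inr e₂.2) = .inl e₂) = true := by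
      rw [decide_eq_true_iff]
      exact Or.inr (by rw [he₂2]; exact hf2.symm)
    have hsub : ({e₁, e₂} : Finset (V × V)) ⊆
        E.filter (fun e => e.2 = b ∧
          decide (f (.inl e.2) = .inl e ∨ f (.inr e.2) = .inl e) = true) := by
      intro x hx
      rcases Finset.mem_insert.mp hx with rfl | hx
      · exact mem_filter.mpr ⟨he₁E, he₁2, hd1⟩
      · rw [Finset.mem_singleton.mp hx]
        exact mem_filter.mpr ⟨he₂E, he₂2, hd2⟩
    calc 2 = ({e₁, e₂} : Finset (V × V)).card := (Finset.card_pair hne).symm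
      _ ≤ _ := Finset.card_le_card hsub

lemma main_aux {V : Type*} [Fintype V] [DecidableEq V]
    (G : SimpleGraph V) [DecidableRel G.Adj] (k : ℕ) (hk : 4 ≤ k)
    (hcrit : IsCritical G k) (A B : Finset V) (hdisj : Disjoint A B)
    (hA : ∀ a ∈ A, G.degree a = k - 1) (hB : ∀ b ∈ B, G.degree b = k)
    (hne : (A ∪ B).Nonempty)
    (Xs : Finset V) (hXs : Xs = A ∨ Xs = B)
    (hInd : ∀ u v, u ∈ A ∪ B → v ∈ A ∪ B → u ∉ Xs → v ∉ Xs → ¬ G.Adj u v)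
    (h1 : ∀ a ∈ A, 3 ≤ (B.filter (fun b => G.Adj a b)).card)
    (h2 : ∀ b ∈ B, 3 ≤ (A.filter (fun a => G.Adj b a)).card) : False := by
  classical
  set T : Finset V := A ∪ B with hT
  have hAT : A ⊆ T := subset_union_left
  have hBT : B ⊆ T := subset_union_right
  have hABf : ∀ v, v ∈ A → v ∈ B → False := fun v hva hvb =>
    (Finset.disjoint_left.mp hdisj) hva hvb
  set E : Finset (V × V) := (A ×ˢ B).filter (fun e => G.Adj e.1 e.2) with hE
  have hEmem : ∀ e ∈ E, (e.1 ∈ A ∧ e.2 ∈ B) ∧ G.Adj e.1 e.2 := by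
    intro e he
    obtain ⟨hp, hadj⟩ := mem_filter.mp he
    exact ⟨Finset.mem_product.mp hp, hadj⟩
  have hmemE : ∀ a ∈ A, ∀ b ∈ B, G.Adj a b → (a, b) ∈ E := by
    intro a ha b hb hadj
    exact mem_filter.mpr ⟨Finset.mem_product.mpr ⟨ha, hb⟩, hadj⟩
  -- degree counts in E
  have hdA' : ∀ a ∈ A, 3 ≤ (E.filter (fun e => e.1 = a)).card := by
    intro a ha
    have heq : E.filter (fun e => e.1 = a) =
        (B.filter (fun b => G.Adj a b)).image (fun b => (a, b)) := by
      ext e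
      simp only [mem_filter, mem_image, hE, Finset.mem_product]
      constructor
      · rintro ⟨⟨⟨h1', h2'⟩, hadj⟩, he1⟩
        exact ⟨e.2, ⟨h2', he1 ▸ hadj⟩, by rw [← he1]⟩
      · rintro ⟨b, ⟨hb, hadj⟩, rfl⟩
        exact ⟨⟨⟨ha, hb⟩, hadj⟩, rfl⟩
    rw [heq, Finset.card_image_of_injective _ (fun x y h => (Prod.mk.injEq _ _ _ _).mp h |>.2)]
    exact h1 a ha
  have hdB' : ∀ b ∈ B, 3 ≤ (E.filter (fun e => e.2 = b)).card := by
    intro b hb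
    have heq : E.filter (fun e => e.2 = b) =
        (A.filter (fun a => G.Adj b a)).image (fun a => (a, b)) := by
      ext e
      simp only [mem_filter, mem_image, hE, Finset.mem_product]
      constructor
      · rintro ⟨⟨⟨h1', h2'⟩, hadj⟩, he2⟩
        exact ⟨e.1, ⟨h1', he2 ▸ hadj.symm⟩, by rw [← he2]⟩
      · rintro ⟨a, ⟨haa, hadj⟩, rfl⟩
        exact ⟨⟨⟨haa, hb⟩, hadj.symm⟩, rfl⟩
    rw [heq, Finset.card_image_of_injective _ (fun x y h => (Prod.mk.injEq _ _ _ _).mp h |>.1)]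
    exact h2 b hb
  obtain ⟨dir, hdirA, hdirB⟩ := orientation_exists A B hdisj E (fun e he => (hEmem e he).1) hdA' hdB'
  -- the digraph
  set arc : V → V → Prop := fun u v =>
    (G.Adj u v ∧ u ∈ Xs ∧ v ∈ Xs) ∨ ((u, v) ∈ E ∧ dir (u, v) = true) ∨
      ((v, u) ∈ E ∧ dir (v, u) = false) with harc
  haveI : DecidableRel arc := fun u v => Classical.dec _
  have hXsT : Xs ⊆ T := by rcases hXs with rfl | rfl; exacts [hAT, hBT]
  have harcAdj : ∀ u v, arc u v → G.Adj u v ∧ v ∈ T := by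
    intro u v h
    rcases h with ⟨hadj, -, hv⟩ | ⟨he, -⟩ | ⟨he, -⟩
    · exact ⟨hadj, hXsT hv⟩
    · exact ⟨(hEmem _ he).2, hBT (hEmem _ he).1.2⟩
    · exact ⟨((hEmem _ he).2).symm, hAT (hEmem _ he).1.1⟩
  have hirr : ∀ v, ¬ arc v v := by
    intro v h
    exact G.loopless.irrefl v (harcAdj v v h).1
  have hnotXX : ∀ u v, u ∈ A → v ∈ B → u ∈ Xs → v ∈ Xs → False := by
    intro u v hu hv hux hvx
    rcases hXs with rfl | rfl
    · exact hABf v hvx hv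
    · exact hABf u hu hux
  have hsym : ∀ u v, u ∈ Xs → v ∈ Xs → arc u v → arc v u := by
    intro u v hu hv h
    rcases h with ⟨hadj, -, -⟩ | ⟨he, -⟩ | ⟨he, -⟩
    · exact Or.inl ⟨hadj.symm, hv, hu⟩
    · exact (hnotXX u v (hEmem _ he).1.1 (hEmem _ he).1.2 hu hv).elim
    · exact (hnotXX v u (hEmem _ he).1.1 (hEmem _ he).1.2 hv hu).elim
  have hY : ∀ u v, u ∉ Xs → v ∉ Xs → ¬ arc u v := by
    intro u v hu hv h
    rcases h with ⟨-, hux, -⟩ | ⟨he, -⟩ | ⟨he, -⟩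
    · exact hu hux
    · rcases hXs with rfl | rfl
      · exact hu (hEmem _ he).1.1
      · exact hv (hEmem _ he).1.2
    · rcases hXs with rfl | rfl
      · exact hv (hEmem _ he).1.1
      · exact hu (hEmem _ he).1.2
  -- an edge inside T
  obtain ⟨u₀, w₀, hu₀T, hw₀T, hadj₀⟩ :
      ∃ u w, u ∈ T ∧ w ∈ T ∧ G.Adj u w := by
    obtain ⟨v₀, hv₀⟩ := hne
    rcases Finset.mem_union.mp hv₀ with hva | hvb
    · have := h1 v₀ hva
      have hnonempty : (B.filter (fun b => G.Adj v₀ b)).Nonempty := by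
        rw [← Finset.card_pos]; omega
      obtain ⟨b, hbmem⟩ := hnonempty
      obtain ⟨hbB, hbadj⟩ := mem_filter.mp hbmem
      exact ⟨v₀, b, hAT hva, hBT hbB, hbadj⟩
    · have := h2 v₀ hvb
      have hnonempty : (A.filter (fun a => G.Adj v₀ a)).Nonempty := by
        rw [← Finset.card_pos]; omega
      obtain ⟨a, hamem⟩ := hnonempty
      obtain ⟨haA, haadj⟩ := mem_filter.mp hamem
      exact ⟨v₀, a, hBT hvb, hAT haA, haadj⟩
  -- criticality gives a coloring of G minus the internal edges
  set Del : Set (Sym2 V) := {e | ∀ x ∈ e, x ∈ T} with hDel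
  set G' : SimpleGraph V := G.deleteEdges Del with hG'
  have hle : G' ≤ G := SimpleGraph.deleteEdges_le Del
  have hne' : G' ≠ G := by
    intro h
    have : G'.Adj u₀ w₀ := h ▸ hadj₀
    rw [hG', SimpleGraph.deleteEdges_adj] at this
    apply this.2
    intro x hx
    rcases Sym2.mem_iff.mp hx with rfl | rfl
    · exact hu₀T
    · exact hw₀T
  have hchrom := hcrit.2 G' hle hne'
  have hcol : G'.Colorable (k - 1) := SimpleGraph.chromaticNumber_le_iff_colorable.mp hchrom
  obtain φ := hcol.some
  -- lists
  set L : V → Finset ℕ := fun v =>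
    (Finset.range (k - 1)).filter
      (fun col => ∀ w, G.Adj v w → w ∉ T → ((φ w : Fin (k-1)) : ℕ) ≠ col) with hL
  have hLcard : ∀ v, (k - 1) ≤ (L v).card + ((G.neighborFinset v) \ T).card := by
    intro v
    simp only [hL]
    have hsplit := Finset.card_filter_add_card_filter_not
      (s := Finset.range (k - 1))
      (p := fun col => ∀ w, G.Adj v w → w ∉ T → ((φ w : Fin (k-1)) : ℕ) ≠ col)
    have hsub : (Finset.range (k - 1)).filter
        (fun col => ¬ ∀ w, G.Adj v w → w ∉ T → ((φ w : Fin (k-1)) : ℕ) ≠ col) ⊆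
        ((G.neighborFinset v) \ T).image (fun w => ((φ w : Fin (k-1)) : ℕ)) := by
      intro col hcol'
      obtain ⟨-, hcol2⟩ := mem_filter.mp hcol'
      push_neg at hcol2
      obtain ⟨w, hadj, hwT, hcol3⟩ := hcol2
      refine Finset.mem_image.mpr ⟨w, ?_, hcol3⟩
      exact Finset.mem_sdiff.mpr ⟨(SimpleGraph.mem_neighborFinset G v w).mpr hadj, hwT⟩
    have h4 := (Finset.card_le_card hsub).trans Finset.card_image_le
    rw [Finset.card_range] at hsplit
    omega
  have hNinout : ∀ v, ((G.neighborFinset v) \ T).card + ((G.neighborFinset v) ∩ T).card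
      = G.degree v := by
    intro v
    rw [← SimpleGraph.card_neighborFinset_eq_degree]
    exact Finset.card_sdiff_add_card_inter _ _
  -- budgets
  have hbud : ∀ v ∈ T, (T.filter (fun u => arc v u)).card < (L v).card := by
    intro v hv
    set Nin := (G.neighborFinset v) ∩ T with hNin
    have harcsub : T.filter (fun u => arc v u) ⊆ Nin := by
      intro u hu
      obtain ⟨huT, harcu⟩ := mem_filter.mp hu
      exact Finset.mem_inter.mpr
        ⟨(SimpleGraph.mem_neighborFinset G v u).mpr (harcAdj v u harcu).1, huT⟩
    rcases Finset.mem_union.mp hv with hva | hvb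
    · -- v ∈ A
      obtain ⟨e₀, he₀E, he₀1, he₀dir⟩ := hdirA v hva
      have hb₀B : e₀.2 ∈ B := (hEmem _ he₀E).1.2
      have hnoarc : ¬ arc v e₀.2 := by
        intro h
        rcases h with ⟨-, hux, hvx⟩ | ⟨he, hd⟩ | ⟨he, hd⟩
        · exact hnotXX v e₀.2 hva hb₀B hux hvx
        · have : (v, e₀.2) = e₀ := Prod.ext he₀1.symm rfl
          rw [this, he₀dir] at hd
          exact Bool.noConfusion hd
        · exact hABf e₀.2 (hEmem _ he).1.1 hb₀B
      have hb₀Nin : e₀.2 ∈ Nin := by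
        refine Finset.mem_inter.mpr ⟨?_, hBT hb₀B⟩
        rw [SimpleGraph.mem_neighborFinset]
        exact he₀1 ▸ (hEmem _ he₀E).2
      have hsub2 : T.filter (fun u => arc v u) ⊆ Nin.erase e₀.2 := by
        intro u hu
        refine Finset.mem_erase.mpr ⟨?_, harcsub hu⟩
        intro h
        exact hnoarc (h ▸ (mem_filter.mp hu).2)
      have hc1 := Finset.card_le_card hsub2
      rw [Finset.card_erase_of_mem hb₀Nin] at hc1
      have hc2 := hLcard v
      have hc3 := hNinout v
      rw [hA v hva] at hc3
      rw [← hNin] at hc3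
      have hc4 : 1 ≤ Nin.card := Finset.card_pos.mpr ⟨e₀.2, hb₀Nin⟩
      omega
    · -- v ∈ B
      have h2le := hdirB v hvb
      obtain ⟨e₁, he₁m, e₂, he₂m, hne12⟩ :=
        Finset.one_lt_card.mp (lt_of_lt_of_le one_lt_two h2le)
      have hm1 := mem_filter.mp he₁m
      have hm2 := mem_filter.mp he₂m
      obtain ⟨he₁E, he₁2, he₁d⟩ : e₁ ∈ E ∧ e₁.2 = v ∧ dir e₁ = true :=
        ⟨hm1.1, hm1.2.1, hm1.2.2⟩
      obtain ⟨he₂E, he₂2, he₂d⟩ : e₂ ∈ E ∧ e₂.2 = v ∧ dir e₂ = true :=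
        ⟨hm2.1, hm2.2.1, hm2.2.2⟩
      have ha₁A : e₁.1 ∈ A := (hEmem _ he₁E).1.1
      have ha₂A : e₂.1 ∈ A := (hEmem _ he₂E).1.1
      have hane : e₁.1 ≠ e₂.1 := by
        intro h
        exact hne12 (Prod.ext h (he₁2.trans he₂2.symm))
      have hnoarc : ∀ e, e ∈ E → e.2 = v → dir e = true → ¬ arc v e.1 := by
        intro e heE he2 hed h
        rcases h with ⟨-, hux, hvx⟩ | ⟨he, hd⟩ | ⟨he, hd⟩
        · exact hnotXX e.1 v (hEmem _ heE).1.1 hvb hvx hux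
        · exact hABf v (hEmem _ he).1.1 hvb
        · have : (e.1, v) = e := Prod.ext rfl he2.symm
          rw [this, hed] at hd
          exact Bool.noConfusion hd
      have haNin : ∀ e, e ∈ E → e.2 = v → e.1 ∈ Nin := by
        intro e heE he2
        refine Finset.mem_inter.mpr ⟨?_, hAT (hEmem _ heE).1.1⟩
        rw [SimpleGraph.mem_neighborFinset]
        exact he2 ▸ ((hEmem _ heE).2).symm
      have ha₁Nin := haNin e₁ he₁E he₁2
      have ha₂Nin := haNin e₂ he₂E he₂2
      have hsub2 : T.filter (fun u => arc v u) ⊆ (Nin.erase e₁.1).erase e₂.1 := by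
        intro u hu
        refine Finset.mem_erase.mpr ⟨?_, Finset.mem_erase.mpr ⟨?_, harcsub hu⟩⟩
        · intro h
          exact hnoarc e₂ he₂E he₂2 he₂d (h ▸ (mem_filter.mp hu).2)
        · intro h
          exact hnoarc e₁ he₁E he₁2 he₁d (h ▸ (mem_filter.mp hu).2)
      have hc1 := Finset.card_le_card hsub2
      rw [Finset.card_erase_of_mem (Finset.mem_erase.mpr ⟨hane.symm, ha₂Nin⟩),
        Finset.card_erase_of_mem ha₁Nin] at hc1
      have hc2 := hLcard v
      have hc3 := hNinout v
      rw [hB v hvb] at hc3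
      rw [← hNin] at hc3
      have hc4 : 2 ≤ Nin.card := by
        have : ({e₁.1, e₂.1} : Finset V) ⊆ Nin := by
          intro x hx
          rcases Finset.mem_insert.mp hx with rfl | hx
          · exact ha₁Nin
          · rw [Finset.mem_singleton.mp hx]; exact ha₂Nin
        calc 2 = ({e₁.1, e₂.1} : Finset V).card := (Finset.card_pair hane).symm
          _ ≤ _ := Finset.card_le_card this
      omega
  -- color T
  obtain ⟨c, hcmem, hcprop⟩ := kernel_coloring arc Xs hirr hsym hY
    (∑ v ∈ T, (L v).card) T L le_rfl hbud
  have hclt : ∀ v ∈ T, c v < k - 1 := by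
    intro v hv
    have := hcmem v hv
    rw [hL] at this
    exact Finset.mem_range.mp (Finset.mem_filter.mp this).1
  -- assemble a (k-1)-coloring of G
  set ψ : V → Fin (k - 1) := fun v => if h : v ∈ T then ⟨c v, hclt v h⟩ else φ v with hψ
  have hvalid : ∀ u v, G.Adj u v → ψ u ≠ ψ v := by
    intro u v hadj
    by_cases huT : u ∈ T <;> by_cases hvT : v ∈ T
    · -- both in T: some arc between them
      have harcor : arc u v ∨ arc v u := by
        rcases Finset.mem_union.mp huT with hua | hub <;>
          rcases Finset.mem_union.mp hvT with hva | hvb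
        · -- both in A
          rcases hXs with rfl | rfl
          · exact Or.inl (Or.inl ⟨hadj, hua, hva⟩)
          · exact absurd hadj (hInd u v huT hvT (fun h => hABf u hua h)
              (fun h => hABf v hva h))
        · -- u ∈ A, v ∈ B
          have heE := hmemE u hua v hvb hadj
          cases hd : dir (u, v) with
          | true => exact Or.inl (Or.inr (Or.inl ⟨heE, hd⟩))
          | false => exact Or.inr (Or.inr (Or.inr ⟨heE, hd⟩))
        · -- u ∈ B, v ∈ A
          have heE := hmemE v hva u hub hadj.symm
          cases hd : dir (v, u) with
          | true => exact Or.inr (Or.inr (Or.inl ⟨heE, hd⟩))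
          | false => exact Or.inl (Or.inr (Or.inr ⟨heE, hd⟩))
        · -- both in B
          rcases hXs with rfl | rfl
          · exact absurd hadj (hInd u v huT hvT (fun h => hABf u h hub)
              (fun h => hABf v h hvb))
          · exact Or.inl (Or.inl ⟨hadj, hub, hvb⟩)
      have hcc : c u ≠ c v := by
        rcases harcor with h | h
        · exact hcprop u huT v hvT h
        · exact (hcprop v hvT u huT h).symm
      simp only [hψ, huT, hvT, dif_pos]
      intro h
      exact hcc (congrArg Fin.val h)
    · -- u ∈ T, v ∉ T
      have := hcmem u huT
      rw [hL, Finset.mem_filter] at this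
      have hval := this.2 v hadj hvT
      simp only [hψ, huT, hvT, dif_pos, dif_neg, not_false_iff]
      intro h
      exact hval (by rw [← congrArg Fin.val h])
    · -- u ∉ T, v ∈ T
      have := hcmem v hvT
      rw [hL, Finset.mem_filter] at this
      have hval := this.2 u hadj.symm huT
      simp only [hψ, huT, hvT, dif_pos, dif_neg, not_false_iff]
      intro h
      exact hval (by rw [congrArg Fin.val h])
    · -- both outside T
      have hG'adj : G'.Adj u v := by
        rw [hG', SimpleGraph.deleteEdges_adj]
        refine ⟨hadj, ?_⟩
        intro h
        exact huT (h u (Sym2.mem_iff.mpr (Or.inl rfl)))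
      have := φ.valid hG'adj
      simp only [hψ, huT, hvT, dif_neg, not_false_iff]
      exact this
  have hcolG : G.Colorable (k - 1) := ⟨SimpleGraph.Coloring.mk ψ (fun {u v} h => hvalid u v h)⟩
  have hchromle : G.chromaticNumber ≤ ((k - 1 : ℕ) : ℕ∞) := hcolG.chromaticNumber_le
  rw [hcrit.1] at hchromle
  have : k ≤ k - 1 := Nat.cast_le.mp hchromle
  omega



/-- In a `k`-critical graph (`k ≥ 4`), if `A`, `B` are disjoint
vertex sets, one of them independent, all of `A` of degree `k−1`, all of `B`
of degree `k`, and `A ∪ B ≠ ∅`, then the bipartite graph `G(A,B)` has a vertex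
of degree at most `2`. -/
theorem bipartite_min_degree {V : Type*} [Fintype V] [DecidableEq V]
    (G : SimpleGraph V) [DecidableRel G.Adj] (k : ℕ) (hk : 4 ≤ k)
    (hcrit : IsCritical G k) (A B : Finset V) (hdisj : Disjoint A B)
    (hind : (∀ u ∈ A, ∀ v ∈ A, ¬ G.Adj u v) ∨ (∀ u ∈ B, ∀ v ∈ B, ¬ G.Adj u v))
    (hA : ∀ a ∈ A, G.degree a = k - 1) (hB : ∀ b ∈ B, G.degree b = k)
    (hne : (A ∪ B).Nonempty) :
    (∃ a ∈ A, (B.filter (fun b => G.Adj a b)).card ≤ 2) ∨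
      (∃ b ∈ B, (A.filter (fun a => G.Adj b a)).card ≤ 2) := by
  by_contra hcon
  push_neg at hcon
  obtain ⟨hc1, hc2⟩ := hcon
  have h1 : ∀ a ∈ A, 3 ≤ (B.filter (fun b => G.Adj a b)).card := by
    intro a ha; have := hc1 a ha; omega
  have h2 : ∀ b ∈ B, 3 ≤ (A.filter (fun a => G.Adj b a)).card := by
    intro b hb; have := hc2 b hb; omega
  rcases hind with hiA | hiB
  · refine main_aux G k hk hcrit A B hdisj hA hB hne B (Or.inr rfl) ?_ h1 h2
    intro u v huT hvT huX hvX
    have huA : u ∈ A := by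
      rcases Finset.mem_union.mp huT with h | h
      · exact h
      · exact absurd h huX
    have hvA : v ∈ A := by
      rcases Finset.mem_union.mp hvT with h | h
      · exact h
      · exact absurd h hvX
    exact hiA u huA v hvA
  · refine main_aux G k hk hcrit A B hdisj hA hB hne A (Or.inl rfl) ?_ h1 h2
    intro u v huT hvT huX hvX
    have huB : u ∈ B := by
      rcases Finset.mem_union.mp huT with h | h
      · exact absurd h huX
      · exact h
    have hvB : v ∈ B := by
      rcases Finset.mem_union.mp hvT with h | h
      · exact absurd h hvX
      · exact h
    exact hiB u huB v hvB
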